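/- Let σ be a Frobenius splitting of a commutative ring R of prime characteristic p and let I be an ideal of R that is maximally compatibly split under σ. Then the map σ[t] : R[t] → R[t] defined by σ[t](Σ_i a_i t^i) = Σ_j σ(a_{pj}) t^j maps the Rees algebra R[It] into itself, its restriction to R[It] is a Frobenius splitting of R[It], and σ[t] maps the exceptional ideal I·R[It] into itself. -/

import Mathlib

open Polynomial

section Aux

variable {R : Type*} [CommRing R] (p : ℕ) (hp : p.Prime) [CharP R p]
    (σ : R → R)
    (hadd : ∀ a b : R, σ (a + b) = σ a + σ b)
    (hsemilin : ∀ a b : R, σ (a ^ p * b) = a * σ b)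
    (hone : σ 1 = 1)
    (T : Polynomial R → Polynomial R)
    (hT : ∀ (f : Polynomial R) (j : ℕ), (T f).coeff j = σ (f.coeff (p * j)))

include hadd in
theorem sigma_zero : σ 0 = 0 := by
  have := hadd 0 0
  simp only [add_zero] at this
  exact left_eq_add.mp this

include hadd hT in
theorem T_add (f g : Polynomial R) : T (f + g) = T f + T g := by
  ext j
  rw [coeff_add, hT, hT, hT, coeff_add, hadd]

include hp hadd hone hT in
theorem T_one : T 1 = 1 := by
  ext j
  rw [hT, coeff_one, coeff_one]
  rcases Nat.eq_zero_or_pos j with hj | hj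
  · simp [hj, hone]
  · have hpj : p * j ≠ 0 := Nat.mul_ne_zero hp.pos.ne' hj.ne'
    rw [if_neg hpj, if_neg hj.ne', sigma_zero σ hadd]

include hp hadd hsemilin hT in
theorem T_pmul (f g : Polynomial R) : T (f ^ p * g) = f * T g := by
  haveI : Fact p.Prime := ⟨hp⟩
  induction f using Polynomial.induction_on' with
  | add f₁ f₂ h1 h2 =>
    rw [add_pow_char, add_mul, T_add p σ hadd T hT, h1, h2, add_mul]
  | monomial n a =>
    rw [monomial_pow]
    ext j
    rw [hT, ← C_mul_X_pow_eq_monomial, ← C_mul_X_pow_eq_monomial, mul_assoc, mul_assoc,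
      coeff_C_mul, coeff_C_mul, (commute_X_pow g (n * p)).eq, (commute_X_pow (T g) n).eq,
      coeff_mul_X_pow', coeff_mul_X_pow']
    by_cases h : n ≤ j
    · have h' : n * p ≤ p * j := by
        rw [mul_comm]
        exact Nat.mul_le_mul_left p h
      rw [if_pos h, if_pos h', hT]
      have : p * j - n * p = p * (j - n) := by
        rw [Nat.mul_sub, mul_comm n p]
      rw [this, hsemilin]
    · have h' : ¬ n * p ≤ p * j := by
        intro hc
        exact h (le_of_mul_le_mul_right (by rwa [mul_comm p j] at hc) hp.pos)
      rw [if_neg h, if_neg h', mul_zero, sigma_zero σ hadd, mul_zero]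

end Aux

/-- Let `σ` be a Frobenius splitting of a commutative ring `R` of prime characteristic `p`
and let `I` be an ideal of `R` that is maximally compatibly split under `σ`
(`σ (I^(np+1)) ⊆ I^(n+1)` for all `n ≥ 0`).  Let `T = σ[t] : R[t] → R[t]` be the map
with `(T f).coeff j = σ (f.coeff (p*j))`.  Then `T` maps the Rees algebra `R[It]` into
itself, its restriction to `R[It]` is a Frobenius splitting of `R[It]`, and `T` maps the
exceptional ideal `I·R[It]` into itself. -/
theorem rees_algebra_frobenius_splitting
    {R : Type*} [CommRing R] (p : ℕ) (hp : p.Prime) [CharP R p]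
    (σ : R → R)
    (hadd : ∀ a b : R, σ (a + b) = σ a + σ b)
    (hsemilin : ∀ a b : R, σ (a ^ p * b) = a * σ b)
    (hone : σ 1 = 1)
    (I : Ideal R)
    (hmax : ∀ n : ℕ, ∀ a ∈ I ^ (n * p + 1), σ a ∈ I ^ (n + 1))
    (T : Polynomial R → Polynomial R)
    (hT : ∀ (f : Polynomial R) (j : ℕ), (T f).coeff j = σ (f.coeff (p * j))) :
    (∀ f ∈ reesAlgebra I, T f ∈ reesAlgebra I) ∧
    (∀ τ : reesAlgebra I → reesAlgebra I,
      (∀ x : reesAlgebra I, (τ x : Polynomial R) = T (x : Polynomial R)) →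
      ((∀ x y : reesAlgebra I, τ (x + y) = τ x + τ y) ∧
        (∀ x y : reesAlgebra I, τ (x ^ p * y) = x * τ y) ∧
        τ 1 = 1 ∧
        (∀ x ∈ Ideal.span {x : reesAlgebra I | ∃ a ∈ I, (x : Polynomial R) = Polynomial.C a},
          τ x ∈ Ideal.span {x : reesAlgebra I | ∃ a ∈ I, (x : Polynomial R) = Polynomial.C a}))) := by
  have hσ0 : σ 0 = 0 := sigma_zero σ hadd
  -- key : σ of an element of I^(p*j) lands in I^j
  have key : ∀ (j : ℕ) (a : R), a ∈ I ^ (p * j) → σ a ∈ I ^ j := by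
    intro j a ha
    rcases Nat.eq_zero_or_pos j with hj | hj
    · simp [hj]
    · have h1 : I ^ (p * j) ≤ I ^ ((j - 1) * p + 1) := by
        apply Ideal.pow_le_pow_right
        have := hp.two_le
        nlinarith [Nat.sub_add_cancel hj]
      have := hmax (j - 1) a (h1 ha)
      rwa [Nat.sub_add_cancel hj] at this
  have part1 : ∀ f ∈ reesAlgebra I, T f ∈ reesAlgebra I := by
    intro f hf
    rw [mem_reesAlgebra_iff] at hf ⊢
    intro j
    rw [hT]
    exact key j _ (hf _)
  refine ⟨part1, ?_⟩
  intro τ hτ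
  have hcoe : Function.Injective (Subtype.val : reesAlgebra I → Polynomial R) :=
    Subtype.coe_injective
  have τadd : ∀ x y : reesAlgebra I, τ (x + y) = τ x + τ y := by
    intro x y
    apply hcoe
    push_cast
    rw [hτ, hτ, hτ]
    push_cast
    exact T_add p σ hadd T hT _ _
  refine ⟨τadd, ?_, ?_, ?_⟩
  · intro x y
    apply hcoe
    rw [hτ]
    push_cast
    rw [T_pmul p hp σ hadd hsemilin T hT, hτ]
  · apply hcoe
    rw [hτ]
    push_cast
    exact T_one p hp σ hadd hone T hT
  · -- exceptional ideal
    set S : Set (reesAlgebra I) :=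
      {x : reesAlgebra I | ∃ a ∈ I, (x : Polynomial R) = Polynomial.C a} with hS
    -- (a) elements of span S have coefficients in I^(j+1)
    have ha : ∀ x ∈ Ideal.span S, ∀ j : ℕ, (x : Polynomial R).coeff j ∈ I ^ (j + 1) := by
      intro x hx
      refine Submodule.span_induction ?_ ?_ ?_ ?_ hx
      · rintro y ⟨a, haI, hay⟩ j
        rw [hay, coeff_C]
        by_cases hj : j = 0
        · subst hj; simpa using haI
        · simp [hj]
      · intro j; simp
      · intro y z _ _ hy hz j
        push_cast
        rw [coeff_add]
        exact Ideal.add_mem _ (hy j) (hz j)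
      · intro c y _ hy j
        rw [smul_eq_mul]
        have hcy : ((c * y : reesAlgebra I) : Polynomial R)
            = (c : Polynomial R) * (y : Polynomial R) := rfl
        rw [hcy, coeff_mul]
        refine Ideal.sum_mem _ ?_
        rintro ⟨i, k⟩ hik
        rw [Finset.HasAntidiagonal.mem_antidiagonal] at hik
        have h1 : (c : Polynomial R).coeff i ∈ I ^ i := (mem_reesAlgebra_iff _ _).mp c.2 i
        have h2 : (y : Polynomial R).coeff k ∈ I ^ (k + 1) := hy k
        have := Ideal.mul_mem_mul h1 h2
        rwa [← pow_add, show i + (k + 1) = j + 1 by omega] at this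
    -- (b) elements with coefficients in I^(j+1) are in span S
    have hb : ∀ x : reesAlgebra I,
        (∀ j : ℕ, (x : Polynomial R).coeff j ∈ I ^ (j + 1)) → x ∈ Ideal.span S := by
      intro x hx
      have hmono : ∀ (j : ℕ) (a : R), a ∈ I ^ (j + 1) →
          ∃ y ∈ Ideal.span S, (y : Polynomial R) = monomial j a := by
        intro j a haj
        rw [pow_succ] at haj
        refine Submodule.mul_induction_on haj ?_ ?_
        · intro b hb c hc
          have hmb : (monomial j b : Polynomial R) ∈ reesAlgebra I :=
            reesAlgebra.monomial_mem.mpr hb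
          have hmc : (C c : Polynomial R) ∈ reesAlgebra I := by
            rw [← monomial_zero_left]
            exact reesAlgebra.monomial_mem.mpr (by simpa using hc)
          refine ⟨(⟨monomial j b, hmb⟩ : reesAlgebra I) * ⟨C c, hmc⟩, ?_, ?_⟩
          · exact Ideal.mul_mem_left _ _ (Ideal.subset_span ⟨c, hc, rfl⟩)
          · push_cast
            rw [monomial_mul_C]
        · rintro a₁ a₂ ⟨y₁, hy₁, hy₁'⟩ ⟨y₂, hy₂, hy₂'⟩
          refine ⟨y₁ + y₂, Ideal.add_mem _ hy₁ hy₂, ?_⟩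
          push_cast
          rw [hy₁', hy₂', map_add]
      choose y hy hy' using fun j => hmono j _ (hx j)
      have hxeq : x = ∑ j ∈ (x : Polynomial R).support, y j := by
        apply hcoe
        rw [AddSubmonoidClass.coe_finset_sum]
        conv_lhs => rw [(x : Polynomial R).as_sum_support]
        exact Finset.sum_congr rfl fun j _ => (hy' j).symm
      rw [hxeq]
      exact Ideal.sum_mem _ fun j _ => hy j
    intro x hx
    apply hb
    intro j
    rw [hτ, hT]
    have := ha x hx (p * j)
    have h1 : I ^ (p * j + 1) ≤ I ^ (j * p + 1) := by rw [mul_comm]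
    exact hmax j _ (h1 this)
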